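/- Define the averaging map f : R → R by f(p) = (1/n!) Σ_{w ∈ S_n} w·p. Then f is well defined (maps R into R), each image f(p) is invariant under the dot action (u·f(p) = f(p) for every u ∈ S_n), and the averaged canonical classes {f(p_w) : w ∈ S_n} form a ℂ[t_1,…,t_n]-module basis of R. Hence the dot representation of S_n on R is a direct sum of n! copies of the trivial representation (with ℂ[t_1,…,t_n]-coefficients, twisted by the S_n-action on coefficients). -/

import Mathlib

open MvPolynomial Equiv Finset

noncomputable section

/-- The polynomial ring ℂ[t₁,…,tₙ]. -/
abbrev Pol (n : ℕ) : Type := MvPolynomial (Fin n) ℂ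

/-- The action of a permutation `w` on polynomials by the substitution `tᵢ ↦ t_{w(i)}`. -/
def pact {n : ℕ} (w : Perm (Fin n)) (f : Pol n) : Pol n := rename ⇑w f

/-- The GKM condition defining `R ⊆ ∏_{v ∈ Sₙ} ℂ[t₁,…,tₙ]`: for every `v` and every
transposition `(i j)` with `i < j`, the difference `p(v) − p((i j)v)` is divisible by
`tᵢ − tⱼ`. -/
def GKM (n : ℕ) (p : Perm (Fin n) → Pol n) : Prop :=
  ∀ (v : Perm (Fin n)) (i j : Fin n), i < j →
    (X i - X j : Pol n) ∣ (p v - p (Equiv.swap i j * v))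

/-- The length of a permutation: its number of inversions. -/
def len {n : ℕ} (w : Perm (Fin n)) : ℕ :=
  (Finset.univ.filter fun q : Fin n × Fin n => q.1 < q.2 ∧ w q.2 < w q.1).card

/-- Bruhat order: the partial order generated by `u < (i j) u` whenever `ℓ(u) < ℓ((i j)u)`. -/
def bruhatLE {n : ℕ} : Perm (Fin n) → Perm (Fin n) → Prop :=
  Relation.ReflTransGen
    (fun u v => (∃ i j : Fin n, i < j ∧ v = Equiv.swap i j * u) ∧ len u < len v)

/-- `p` is the canonical class (equivariant Schubert class) of `w`:
(i) each component is homogeneous of degree `ℓ(w)`; (ii) `p(v) = 0` unless `v ≥ w` in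
Bruhat order; (iii) `p(w) = ∏ (tᵢ − tⱼ)` over pairs `i < j` with `ℓ((i j)w) < ℓ(w)`;
and `p` satisfies the GKM conditions. -/
def IsCanonical {n : ℕ} (w : Perm (Fin n)) (p : Perm (Fin n) → Pol n) : Prop :=
  GKM n p ∧
  (∀ v, (p v).IsHomogeneous (len w)) ∧
  (∀ v, ¬ bruhatLE w v → p v = 0) ∧
  p w = ∏ q ∈ Finset.univ.filter
      (fun q : Fin n × Fin n => q.1 < q.2 ∧ len (Equiv.swap q.1 q.2 * w) < len w),
      (X q.1 - X q.2 : Pol n)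

/-- The simple transposition `sᵢ = (i, i+1)`. -/
def sT (n i : ℕ) (h : i + 1 < n) : Perm (Fin n) :=
  Equiv.swap ⟨i, Nat.lt_of_succ_lt h⟩ ⟨i + 1, h⟩

/-- The dot (left) action: `(w·p)(v) = w(p(w⁻¹ v))`. -/
def dot {n : ℕ} (w : Perm (Fin n)) (p : Perm (Fin n) → Pol n) : Perm (Fin n) → Pol n :=
  fun v => pact w (p (w⁻¹ * v))

/-- The star (right) action: `(p * w)(v) = p(vw)`. -/
def starAct {n : ℕ} (p : Perm (Fin n) → Pol n) (w : Perm (Fin n)) :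
    Perm (Fin n) → Pol n :=
  fun v => p (v * w)

/-- `R` as a `ℂ[t₁,…,tₙ]`-submodule of the product. -/
def gkmSubmodule (n : ℕ) : Submodule (Pol n) (Perm (Fin n) → Pol n) where
  carrier := {p | GKM n p}
  add_mem' := by
    intro a b ha hb v i j hij
    have h := dvd_add (ha v i j hij) (hb v i j hij)
    simpa [Pi.add_apply, add_sub_add_comm] using h
  zero_mem' := by
    intro v i j hij
    simp
  smul_mem' := by
    intro c p hp v i j hij
    have h := (hp v i j hij).mul_left c
    simpa [Pi.smul_apply, smul_eq_mul, mul_sub] using h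

/-- The maximal ideal `𝔪 = (t₁,…,tₙ) ⊆ ℂ[t₁,…,tₙ]`. -/
def mIdeal (n : ℕ) : Ideal (Pol n) := Ideal.span (Set.range (X : Fin n → Pol n))

/-- The submodule `𝔪R`: finite sums of products `c • p` with `c ∈ 𝔪` and `p ∈ R`. -/
def mR (n : ℕ) : Submodule (Pol n) (Perm (Fin n) → Pol n) :=
  Submodule.span (Pol n) {q | ∃ c ∈ mIdeal n, ∃ p, GKM n p ∧ q = c • p}


section AvgAux
variable {n : ℕ}

lemma X_sub_X_ne_zero {a b : Fin n} (hab : a ≠ b) : (X a - X b : Pol n) ≠ 0 := by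
  intro h
  have h2 : (X a : Pol n) = X b := by linear_combination h
  have := MvPolynomial.X_injective (R := ℂ) h2
  exact hab this

lemma dvd_sub_rename_swap (a b : Fin n) (g : Pol n) :
    (X a - X b : Pol n) ∣ g - rename ⇑(Equiv.swap a b) g := by
  classical
  set I : Ideal (Pol n) := Ideal.span {(X a - X b : Pol n)} with hI
  rw [← Ideal.mem_span_singleton]
  have key : (Ideal.Quotient.mkₐ ℂ I).comp (rename ⇑(Equiv.swap a b)) = Ideal.Quotient.mkₐ ℂ I := by
    apply MvPolynomial.algHom_ext
    intro k
    simp only [AlgHom.comp_apply, rename_X, Ideal.Quotient.mkₐ_eq_mk]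
    rw [Ideal.Quotient.mk_eq_mk_iff_sub_mem]
    rcases eq_or_ne k a with rfl | hka
    · rw [Equiv.swap_apply_left]
      have : (X b - X k : Pol n) = -(X k - X b) := by ring
      rw [this]
      exact neg_mem (Ideal.subset_span rfl)
    · rcases eq_or_ne k b with rfl | hkb
      · rw [Equiv.swap_apply_right]
        exact Ideal.subset_span rfl
      · rw [Equiv.swap_apply_of_ne_of_ne hka hkb, sub_self]
        exact zero_mem I
  have := DFunLike.congr_fun key g
  simp only [AlgHom.comp_apply, Ideal.Quotient.mkₐ_eq_mk] at this
  rw [← Ideal.Quotient.mk_eq_mk_iff_sub_mem]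
  exact this.symm

lemma prime_X_sub_X {a b : Fin n} (hab : a ≠ b) : Prime (X a - X b : Pol n) := by
  classical
  rw [← Ideal.span_singleton_prime (X_sub_X_ne_zero hab)]
  set φ : Pol n →ₐ[ℂ] Pol n := aeval (fun k => if k = a then X b else X k) with hφ
  have hspan : Ideal.span {(X a - X b : Pol n)} = RingHom.ker φ.toRingHom := by
    apply le_antisymm
    · rw [Ideal.span_le, Set.singleton_subset_iff]
      simp only [SetLike.mem_coe, RingHom.mem_ker, AlgHom.toRingHom_eq_coe, RingHom.coe_coe,
        map_sub, hφ, aeval_X]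
      simp
    · intro g hg
      rw [RingHom.mem_ker] at hg
      set I : Ideal (Pol n) := Ideal.span {(X a - X b : Pol n)} with hI
      have key : (Ideal.Quotient.mkₐ ℂ I).comp φ = Ideal.Quotient.mkₐ ℂ I := by
        apply MvPolynomial.algHom_ext
        intro k
        simp only [AlgHom.comp_apply, Ideal.Quotient.mkₐ_eq_mk, hφ, aeval_X]
        rcases eq_or_ne k a with rfl | hka
        · rw [if_pos rfl, Ideal.Quotient.mk_eq_mk_iff_sub_mem]
          have : (X b - X k : Pol n) = -(X k - X b) := by ring
          rw [this]
          exact neg_mem (Ideal.subset_span rfl)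
        · rw [if_neg hka]
      have h2 := DFunLike.congr_fun key g
      simp only [AlgHom.comp_apply, Ideal.Quotient.mkₐ_eq_mk] at h2
      rw [show φ g = (0 : Pol n) from hg, map_zero] at h2
      rw [← Ideal.Quotient.eq_zero_iff_mem]
      exact h2.symm
  rw [hspan]
  exact RingHom.ker_isPrime _

lemma not_dvd_X_sub_X {a b c d : Fin n} (hab : a < b) (hcd : c < d)
    (hne : (a, b) ≠ (c, d)) : ¬ ((X a - X b : Pol n) ∣ (X c - X d : Pol n)) := by
  classical
  obtain ⟨x, hx1, hxa, hxb⟩ : ∃ x, (x = c ∨ x = d) ∧ x ≠ a ∧ x ≠ b := by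
    by_cases hc : c ≠ a ∧ c ≠ b
    · exact ⟨c, Or.inl rfl, hc.1, hc.2⟩
    · push_neg at hc
      refine ⟨d, Or.inr rfl, ?_, ?_⟩
      · intro hda
        rcases eq_or_ne c a with rfl | hca
        · exact absurd hda (by rintro rfl; exact absurd hcd (lt_irrefl _))
        · have hcb := hc hca
          subst hcb hda
          exact absurd (hcd.trans hab) (lt_irrefl _)
      · intro hdb
        rcases eq_or_ne c a with rfl | hca
        · exact hne (by rw [hdb])
        · have hcb := hc hca
          subst hcb hdb
          exact absurd hcd (lt_irrefl _)
  intro hdvd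
  have h2 := map_dvd (eval (fun k : Fin n => if k = x then (1 : ℂ) else 0)) hdvd
  simp only [map_sub, eval_X] at h2
  rw [if_neg hxa.symm, if_neg hxb.symm] at h2
  norm_num at h2
  rcases hx1 with rfl | rfl
  · rw [if_pos rfl, if_neg (fun h : d = x => absurd hcd (h ▸ lt_irrefl _))] at h2
    norm_num at h2
  · rw [if_neg (fun h : c = x => absurd hcd (h ▸ lt_irrefl _)), if_pos rfl] at h2
    norm_num at h2

lemma prod_primes_dvd' {ι : Type} [DecidableEq ι] (s : Finset ι) (f : ι → Pol n) (g : Pol n)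
    (hp : ∀ i ∈ s, Prime (f i))
    (hnd : ∀ i ∈ s, ∀ j ∈ s, i ≠ j → ¬ f i ∣ f j)
    (hd : ∀ i ∈ s, f i ∣ g) : (∏ i ∈ s, f i) ∣ g := by
  classical
  induction s using Finset.induction_on with
  | empty => simp
  | @insert a s ha ih =>
    obtain ⟨h', rfl⟩ := ih (fun i hi => hp i (mem_insert_of_mem hi))
      (fun i hi j hj hij => hnd i (mem_insert_of_mem hi) j (mem_insert_of_mem hj) hij)
      (fun i hi => hd i (mem_insert_of_mem hi))
    have hfa : f a ∣ (∏ i ∈ s, f i) * h' := hd a (mem_insert_self a s)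
    have hpa := hp a (mem_insert_self a s)
    rcases hpa.2.2 _ _ hfa with hcase | hcase
    · exfalso
      obtain ⟨i, hi, hdvd⟩ := (hpa.dvd_finset_prod_iff f).mp hcase
      exact hnd a (mem_insert_self a s) i (mem_insert_of_mem hi)
        (by rintro rfl; exact ha hi) hdvd
    · obtain ⟨h'', rfl⟩ := hcase
      rw [Finset.prod_insert ha]
      exact ⟨h'', by ring⟩

end AvgAux
section AvgAux2
variable {n : ℕ}

lemma gkm_symm {p : Perm (Fin n) → Pol n} (hp : GKM n p) (v : Perm (Fin n))
    {i j : Fin n} (hij : i ≠ j) :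
    (X i - X j : Pol n) ∣ p v - p (Equiv.swap i j * v) := by
  rcases lt_or_gt_of_ne hij with h | h
  · exact hp v i j h
  · have h1 := hp v j i h
    rw [Equiv.swap_comm j i] at h1
    have h2 : (X i - X j : Pol n) = -(X j - X i) := by ring
    rw [h2]
    exact (neg_dvd).mpr h1

lemma dot_gkm {p : Perm (Fin n) → Pol n} (hp : GKM n p) (w : Perm (Fin n)) :
    GKM n (dot w p) := by
  intro v i j hij
  have hne : w⁻¹ i ≠ w⁻¹ j := fun h => hij.ne ((w⁻¹).injective h)
  have h := gkm_symm hp (w⁻¹ * v) hne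
  have h2 := map_dvd (rename (R := ℂ) ⇑w) h
  rw [map_sub, map_sub, rename_X, rename_X] at h2
  simp only [show ∀ x, w (w⁻¹ x) = x from fun x => w.apply_symm_apply x] at h2
  have h3 : Equiv.swap (w⁻¹ i) (w⁻¹ j) * (w⁻¹ * v) = w⁻¹ * (Equiv.swap i j * v) := by
    rw [Equiv.swap_apply_apply w⁻¹ i j]
    group
  rw [h3] at h2
  simpa [dot, pact] using h2

lemma dot_dot (u w : Perm (Fin n)) (p : Perm (Fin n) → Pol n) :
    dot u (dot w p) = dot (u * w) p := by
  funext v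
  simp only [dot, pact]
  rw [rename_rename]
  rw [mul_inv_rev, mul_assoc]
  rfl

lemma dot_csmul (u : Perm (Fin n)) (c : ℂ) (p : Perm (Fin n) → Pol n) :
    dot u (c • p) = c • dot u p := by
  funext v
  simp only [dot, pact, Pi.smul_apply, map_smul]

lemma csmul_eq_Csmul (c : ℂ) (p : Perm (Fin n) → Pol n) :
    c • p = (C c : Pol n) • p := by
  funext v
  simp only [Pi.smul_apply, smul_eq_mul, smul_eq_C_mul]

lemma avg_gkm {p : Perm (Fin n) → Pol n} (hp : GKM n p) (c : ℂ) :
    GKM n (c • ∑ w : Perm (Fin n), dot w p) := by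
  rw [csmul_eq_Csmul]
  exact (gkmSubmodule n).smul_mem _
    (Submodule.sum_mem _ fun w _ => dot_gkm hp w)

lemma dot_sum_eq (u : Perm (Fin n)) (p : Perm (Fin n) → Pol n) :
    dot u (∑ w : Perm (Fin n), dot w p) = ∑ w : Perm (Fin n), dot w p := by
  have h1 : dot u (∑ w : Perm (Fin n), dot w p)
      = ∑ w : Perm (Fin n), dot u (dot w p) := by
    funext v
    simp only [dot, pact, Finset.sum_apply, map_sum]
  rw [h1]
  simp_rw [dot_dot]
  exact Fintype.sum_equiv (Equiv.mulLeft u) _ _ (fun w => rfl)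

lemma dot_avg (u : Perm (Fin n)) (c : ℂ) (p : Perm (Fin n) → Pol n) :
    dot u (c • ∑ w : Perm (Fin n), dot w p) = c • ∑ w : Perm (Fin n), dot w p := by
  rw [dot_csmul, dot_sum_eq]

end AvgAux2
section AvgAux3
variable {n : ℕ}

lemma bruhat_len {u v : Perm (Fin n)} (h : bruhatLE u v) : u = v ∨ len u < len v := by
  induction h with
  | refl => exact Or.inl rfl
  | tail hb hstep ih =>
    rcases ih with rfl | hlt
    · exact Or.inr hstep.2
    · exact Or.inr (hlt.trans hstep.2)

lemma pw_self_ne_zero {w : Perm (Fin n)} {p : Perm (Fin n) → Pol n}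
    (h : IsCanonical w p) : p w ≠ 0 := by
  rw [h.2.2.2]
  rw [Finset.prod_ne_zero_iff]
  exact fun q hq => X_sub_X_ne_zero (ne_of_lt (Finset.mem_filter.mp hq).2.1)

open scoped Classical in
lemma span_pw_aux (pw : Perm (Fin n) → Perm (Fin n) → Pol n)
    (hpw : ∀ w, IsCanonical w (pw w)) :
    ∀ (k : ℕ) (p : Perm (Fin n) → Pol n), GKM n p →
      (Finset.univ.filter (fun u : Perm (Fin n) =>
        ∃ s, p s ≠ 0 ∧ bruhatLE s u)).card ≤ k →
      ∃ c : Perm (Fin n) → Pol n, ∑ v : Perm (Fin n), c v • pw v = p := by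
  classical
  intro k
  induction k with
  | zero =>
    intro p _ hcard
    refine ⟨0, ?_⟩
    have hz : ∀ v, p v = 0 := by
      intro v
      by_contra hv
      have hmem : v ∈ Finset.univ.filter (fun u : Perm (Fin n) =>
          ∃ s, p s ≠ 0 ∧ bruhatLE s u) :=
        Finset.mem_filter.mpr ⟨Finset.mem_univ v, v, hv, Relation.ReflTransGen.refl⟩
      have := Finset.card_pos.mpr ⟨v, hmem⟩
      omega
    funext v
    simp [funext hz]
  | succ k ih =>
    intro p hp hcard
    by_cases hsupp : ∀ v, p v = 0
    · exact ⟨0, by funext v; simp [funext hsupp]⟩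
    push_neg at hsupp
    set supp := Finset.univ.filter (fun v : Perm (Fin n) => p v ≠ 0) with hsuppdef
    have hne : supp.Nonempty :=
      ⟨hsupp.choose, Finset.mem_filter.mpr ⟨Finset.mem_univ _, hsupp.choose_spec⟩⟩
    obtain ⟨m, hm, hmin⟩ := Finset.exists_min_image supp len hne
    have hpm : p m ≠ 0 := (Finset.mem_filter.mp hm).2
    set inv := Finset.univ.filter
      (fun q : Fin n × Fin n => q.1 < q.2 ∧ len (Equiv.swap q.1 q.2 * m) < len m) with hinv
    have hdvd : ∀ q ∈ inv, (X q.1 - X q.2 : Pol n) ∣ p m := by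
      intro q hq
      obtain ⟨hlt, hlen⟩ := (Finset.mem_filter.mp hq).2
      have hzero : p (Equiv.swap q.1 q.2 * m) = 0 := by
        by_contra hz
        have hmem : Equiv.swap q.1 q.2 * m ∈ supp :=
          Finset.mem_filter.mpr ⟨Finset.mem_univ _, hz⟩
        exact absurd (hmin _ hmem) (not_le.mpr hlen)
      have h := hp m q.1 q.2 hlt
      rwa [hzero, sub_zero] at h
    have hprod : (∏ q ∈ inv, (X q.1 - X q.2 : Pol n)) ∣ p m := by
      refine prod_primes_dvd' inv _ _ ?_ ?_ hdvd
      · exact fun q hq => prime_X_sub_X (ne_of_lt (Finset.mem_filter.mp hq).2.1)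
      · intro q hq r hr hqr
        refine not_dvd_X_sub_X (Finset.mem_filter.mp hq).2.1 (Finset.mem_filter.mp hr).2.1 ?_
        simpa using hqr
    obtain ⟨cm, hcm⟩ := hprod
    set p' : Perm (Fin n) → Pol n := p - cm • pw m with hp'def
    have hp' : GKM n p' :=
      (gkmSubmodule n).sub_mem hp ((gkmSubmodule n).smul_mem cm (hpw m).1)
    have hp'm : p' m = 0 := by
      simp only [hp'def, Pi.sub_apply, Pi.smul_apply, smul_eq_mul]
      rw [(hpw m).2.2.2, ← hinv, hcm]
      ring
    -- support of p' lies in supp ∪ {u | bruhatLE m u}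
    have hsupp' : ∀ s, p' s ≠ 0 → p s ≠ 0 ∨ bruhatLE m s := by
      intro s hs
      by_cases hps : p s ≠ 0
      · exact Or.inl hps
      · push_neg at hps
        right
        by_contra hb
        have : pw m s = 0 := (hpw m).2.2.1 s hb
        apply hs
        simp [hp'def, hps, this]
    set U := Finset.univ.filter (fun u : Perm (Fin n) => ∃ s, p s ≠ 0 ∧ bruhatLE s u) with hU
    set U' := Finset.univ.filter (fun u : Perm (Fin n) => ∃ s, p' s ≠ 0 ∧ bruhatLE s u) with hU'
    have hsub : U' ⊆ U := by
      intro u hu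
      obtain ⟨s, hs, hsu⟩ := (Finset.mem_filter.mp hu).2
      rcases hsupp' s hs with hcase | hcase
      · exact Finset.mem_filter.mpr ⟨Finset.mem_univ _, s, hcase, hsu⟩
      · exact Finset.mem_filter.mpr
          ⟨Finset.mem_univ _, m, hpm, Relation.ReflTransGen.trans hcase hsu⟩
    have hmU : m ∈ U :=
      Finset.mem_filter.mpr ⟨Finset.mem_univ _, m, hpm, Relation.ReflTransGen.refl⟩
    have hmU' : m ∉ U' := by
      intro hmem
      obtain ⟨s, hs, hsm⟩ := (Finset.mem_filter.mp hmem).2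
      have hsm' : s = m := by
        rcases hsupp' s hs with hcase | hcase
        · rcases bruhat_len hsm with h | h
          · exact h
          · have hmem2 : s ∈ supp := Finset.mem_filter.mpr ⟨Finset.mem_univ _, hcase⟩
            exact absurd (hmin s hmem2) (not_le.mpr h)
        · rcases bruhat_len hsm with h | h
          · exact h
          · rcases bruhat_len hcase with h2 | h2
            · exact h2.symm
            · omega
      rw [hsm'] at hs
      exact hs hp'm
    have hcard' : U'.card ≤ k := by
      have hlt : U'.card < U.card :=
        Finset.card_lt_card ((Finset.ssubset_iff_of_subset hsub).mpr ⟨m, hmU, hmU'⟩)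
      omega
    obtain ⟨c, hc⟩ := ih p' hp' hcard'
    refine ⟨c + fun v => if v = m then cm else 0, ?_⟩
    have hδ : ∑ v : Perm (Fin n), (if v = m then cm else 0) • pw v = cm • pw m := by
      rw [Finset.sum_eq_single m]
      · simp
      · intro b _ hb; simp [hb]
      · intro h; exact absurd (Finset.mem_univ m) h
    calc ∑ v : Perm (Fin n), (c + fun v => if v = m then cm else 0) v • pw v
        = ∑ v : Perm (Fin n), (c v • pw v + (if v = m then cm else 0) • pw v) := by
          apply Finset.sum_congr rfl; intro v _; simp [add_smul]
      _ = p' + cm • pw m := by rw [Finset.sum_add_distrib, hc, hδ]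
      _ = p := by simp [hp'def]

lemma linind_pw (pw : Perm (Fin n) → Perm (Fin n) → Pol n)
    (hpw : ∀ w, IsCanonical w (pw w))
    (g : Perm (Fin n) → Pol n) (hg : ∑ v : Perm (Fin n), g v • pw v = 0) :
    ∀ v, g v = 0 := by
  classical
  by_contra hne
  push_neg at hne
  set supp := Finset.univ.filter (fun v : Perm (Fin n) => g v ≠ 0) with hsuppdef
  have hnonempty : supp.Nonempty :=
    ⟨hne.choose, Finset.mem_filter.mpr ⟨Finset.mem_univ _, hne.choose_spec⟩⟩
  obtain ⟨m, hm, hmin⟩ := Finset.exists_min_image supp len hnonempty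
  have hgm : g m ≠ 0 := (Finset.mem_filter.mp hm).2
  have h := congrFun hg m
  rw [Finset.sum_apply] at h
  simp only [Pi.smul_apply, smul_eq_mul, Pi.zero_apply] at h
  rw [Finset.sum_eq_single m] at h
  · rcases mul_eq_zero.mp h with h2 | h2
    · exact hgm h2
    · exact pw_self_ne_zero (hpw m) h2
  · intro b _ hb
    by_cases hgb : g b = 0
    · simp [hgb]
    · have hmem : b ∈ supp := Finset.mem_filter.mpr ⟨Finset.mem_univ _, hgb⟩
      have hpwb : pw b m = 0 := by
        apply (hpw b).2.2.1
        intro hbm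
        rcases bruhat_len hbm with h3 | h3
        · exact hb h3
        · exact absurd (hmin b hmem) (not_le.mpr h3)
      simp [hpwb]
  · intro h2; exact absurd (Finset.mem_univ m) h2

end AvgAux3
section AvgAux4
variable {n : ℕ}

lemma csmul_isHomogeneous {q : Pol n} {d : ℕ} (hq : q.IsHomogeneous d) (c : ℂ) :
    (c • q).IsHomogeneous d := by
  rw [smul_eq_C_mul]
  simpa using (isHomogeneous_C (σ := Fin n) c).mul hq

lemma avg_component_isHomogeneous {p : Perm (Fin n) → Pol n} {d : ℕ}
    (hp : ∀ v, (p v).IsHomogeneous d) (c : ℂ) (v : Perm (Fin n)) :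
    ((c • ∑ w : Perm (Fin n), dot w p) v).IsHomogeneous d := by
  simp only [Pi.smul_apply, Finset.sum_apply]
  apply csmul_isHomogeneous
  apply MvPolynomial.IsHomogeneous.sum
  intro w _
  exact (hp (w⁻¹ * v)).rename_isHomogeneous

lemma homogComp_of_isHomogeneous {q : Pol n} {d : ℕ} (hq : q.IsHomogeneous d) (m : ℕ) :
    homogeneousComponent m q = if m = d then q else 0 :=
  homogeneousComponent_of_mem ((mem_homogeneousSubmodule _ _).mpr hq)

lemma homogComp_mul {a b : Pol n} {e : ℕ} (hb : b.IsHomogeneous e) (d : ℕ) :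
    homogeneousComponent d (a * b) =
      if e ≤ d then homogeneousComponent (d - e) a * b else 0 := by
  classical
  conv_lhs => rw [← sum_homogeneousComponent a, Finset.sum_mul, map_sum]
  have hterm : ∀ i, homogeneousComponent d (homogeneousComponent i a * b)
      = if d = i + e then homogeneousComponent i a * b else 0 := fun i =>
    homogComp_of_isHomogeneous ((homogeneousComponent_isHomogeneous i a).mul hb) d
  rw [Finset.sum_congr rfl (fun i _ => hterm i)]
  rcases le_or_gt e d with he | he
  · rw [if_pos he]
    by_cases hmem : d - e ∈ Finset.range (a.totalDegree + 1)
    · rw [Finset.sum_eq_single (d - e)]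
      · rw [if_pos (by omega)]
      · intro i hi hine
        rw [if_neg (by omega)]
      · intro h; exact absurd hmem h
    · rw [Finset.sum_eq_zero, homogeneousComponent_eq_zero, zero_mul]
      · rw [Finset.mem_range] at hmem; omega
      · intro i hi
        rw [Finset.mem_range] at hi
        rw [Finset.mem_range] at hmem
        rw [if_neg (by omega)]
  · rw [if_neg (not_le.mpr he), Finset.sum_eq_zero]
    intro i _
    rw [if_neg (by omega)]

lemma homog_zero_constantCoeff_eq_zero {q : Pol n}
    (hq : q.IsHomogeneous 0) (hc : constantCoeff q = 0) : q = 0 := by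
  ext d
  rw [coeff_zero]
  rcases eq_or_ne d 0 with rfl | hd
  · exact hc
  · exact hq.coeff_eq_zero (fun h => hd ((Finsupp.degree_eq_zero_iff d).mp h))

end AvgAux4
section AvgAux5
variable {n : ℕ}

lemma X_sub_X_mem_mIdeal (a b : Fin n) : (X a - X b : Pol n) ∈ mIdeal n :=
  sub_mem (Ideal.subset_span ⟨a, rfl⟩) (Ideal.subset_span ⟨b, rfl⟩)

lemma dot_one (q : Perm (Fin n) → Pol n) : dot 1 q = q := by
  funext v
  simp [dot, pact]

lemma dot_swap_sub_mem_mR' {q : Perm (Fin n) → Pol n} (hq : GKM n q)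
    {a b : Fin n} (hab : a < b) :
    dot (Equiv.swap a b) q - q ∈ mR n := by
  classical
  have habne : a ≠ b := ne_of_lt hab
  set τ := Equiv.swap a b with hτ
  set f : Pol n := X a - X b with hf
  have hfne : f ≠ 0 := X_sub_X_ne_zero habne
  have happ : ∀ u, (dot τ q - q) u = rename ⇑τ (q (τ * u)) - q u := by
    intro u
    simp only [Pi.sub_apply, dot, pact]
    rw [show τ⁻¹ = τ from Equiv.swap_inv a b]
  have hdvd : ∀ u, f ∣ (dot τ q - q) u := by
    intro u
    rw [happ u]
    have h2 : rename ⇑τ (q (τ * u)) - q u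
        = -((q (τ * u)) - rename ⇑τ (q (τ * u))) + (q (τ * u) - q u) := by ring
    rw [h2]
    apply dvd_add
    · exact dvd_neg.mpr (dvd_sub_rename_swap a b (q (τ * u)))
    · have h3 := gkm_symm hq (τ * u) habne
      rw [show Equiv.swap a b * (τ * u) = u by
        rw [hτ, ← mul_assoc, Equiv.swap_mul_self, one_mul]] at h3
      exact h3
  choose r hr using hdvd
  have heq : ∀ u, f * r u = rename ⇑τ (q (τ * u)) - q u := by
    intro u
    rw [← happ u, ← hr u]
  have hrename_f : rename ⇑τ f = -f := by
    rw [hf]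
    simp only [map_sub, rename_X]
    rw [hτ, Equiv.swap_apply_left, Equiv.swap_apply_right]
    ring
  have hcompττ : ⇑τ ∘ ⇑τ = id := by
    funext x
    simp [hτ, Equiv.swap_apply_self]
  have hrswap : ∀ u, r (τ * u) = rename ⇑τ (r u) := by
    intro u
    have hττ : τ * (τ * u) = u := by rw [← mul_assoc, hτ, Equiv.swap_mul_self, one_mul]
    have h1 : f * r (τ * u) = rename ⇑τ (q u) - q (τ * u) := by rw [heq (τ * u), hττ]
    have h2 : rename ⇑τ (f * r u) = q (τ * u) - rename ⇑τ (q u) := by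
      rw [heq u, map_sub, rename_rename, hcompττ, rename_id, AlgHom.id_apply]
    have h3 : rename ⇑τ (f * r u) = -f * rename ⇑τ (r u) := by rw [map_mul, hrename_f]
    apply mul_left_cancel₀ hfne
    rw [h1]
    have h4 := h3.symm.trans h2
    linear_combination h4
  have hrGKM : GKM n r := by
    intro v i j hij
    by_cases hcase : (i, j) = (a, b)
    · obtain ⟨rfl, rfl⟩ := Prod.ext_iff.mp hcase
      rw [← hτ, hrswap v]
      exact dvd_sub_rename_swap _ _ (r v)
    · set σ := Equiv.swap i j with hσ
      set g : Pol n := X i - X j with hg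
      have hgprime : Prime g := prime_X_sub_X (ne_of_lt hij)
      have hgnd : ¬ g ∣ f := not_dvd_X_sub_X hij hab hcase
      have hconj : τ * (σ * v) = Equiv.swap (τ i) (τ j) * (τ * v) := by
        rw [Equiv.swap_apply_apply τ i j]
        group
        rfl
      have hkey : f * (r v - r (σ * v)) =
          rename ⇑τ (q (τ * v) - q (Equiv.swap (τ i) (τ j) * (τ * v)))
            - (q v - q (σ * v)) := by
        rw [mul_sub, heq v, heq (σ * v), hconj, map_sub]
        ring
      have d1 : g ∣ rename ⇑τ (q (τ * v) - q (Equiv.swap (τ i) (τ j) * (τ * v))) := by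
        have hτij : τ i ≠ τ j := fun h => (ne_of_lt hij) (τ.injective h)
        have h5 := map_dvd (rename (R := ℂ) ⇑τ) (gkm_symm hq (τ * v) hτij)
        rw [map_sub, rename_X, rename_X] at h5
        rw [show τ (τ i) = i from Equiv.swap_apply_self a b i,
          show τ (τ j) = j from Equiv.swap_apply_self a b j] at h5
        exact h5
      have d2 : g ∣ (q v - q (σ * v)) := hq v i j hij
      have d3 : g ∣ f * (r v - r (σ * v)) := hkey ▸ dvd_sub d1 d2
      exact (hgprime.dvd_or_dvd d3).resolve_left hgnd
  have hreq : dot τ q - q = f • r := by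
    funext u
    rw [Pi.smul_apply, smul_eq_mul, ← hr u]
  rw [hreq]
  exact Submodule.subset_span ⟨f, X_sub_X_mem_mIdeal a b, r, hrGKM, rfl⟩

lemma dot_swap_sub_mem_mR {q : Perm (Fin n) → Pol n} (hq : GKM n q)
    {a b : Fin n} (hab : a ≠ b) :
    dot (Equiv.swap a b) q - q ∈ mR n := by
  rcases lt_or_gt_of_ne hab with h | h
  · exact dot_swap_sub_mem_mR' hq h
  · rw [Equiv.swap_comm]
    exact dot_swap_sub_mem_mR' hq h

lemma dot_sub_mem_mR {q : Perm (Fin n) → Pol n} (hq : GKM n q) (u : Perm (Fin n)) :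
    dot u q - q ∈ mR n := by
  refine Equiv.Perm.swap_induction_on u ?_ ?_
  · rw [dot_one, sub_self]
    exact zero_mem _
  · intro f x y hxy ih
    have hstep : dot (Equiv.swap x y * f) q - q
        = (dot (Equiv.swap x y) (dot f q) - dot f q) + (dot f q - q) := by
      rw [dot_dot]
      ring
    rw [hstep]
    exact add_mem (dot_swap_sub_mem_mR (dot_gkm hq f) hxy) ih

lemma avg_sub_mem_mR {q : Perm (Fin n) → Pol n} (hq : GKM n q) :
    ((n.factorial : ℂ)⁻¹ • ∑ w : Perm (Fin n), dot w q) - q ∈ mR n := by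
  have hfact : (n.factorial : ℂ) ≠ 0 := Nat.cast_ne_zero.mpr (Nat.factorial_ne_zero n)
  have hconst : (n.factorial : ℂ)⁻¹ • ∑ _w : Perm (Fin n), q = q := by
    rw [Finset.sum_const, Finset.card_univ, Fintype.card_perm, Fintype.card_fin,
      ← Nat.cast_smul_eq_nsmul ℂ, smul_smul, inv_mul_cancel₀ hfact, one_smul]
  have hkey : ((n.factorial : ℂ)⁻¹ • ∑ w : Perm (Fin n), dot w q) - q
      = (n.factorial : ℂ)⁻¹ • ∑ w : Perm (Fin n), (dot w q - q) := by
    rw [Finset.sum_sub_distrib, smul_sub, hconst]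
  rw [hkey, csmul_eq_Csmul]
  exact Submodule.smul_mem _ _ (Submodule.sum_mem _ fun w _ => dot_sub_mem_mR hq w)

end AvgAux5
section AvgAux6
variable {n : ℕ}

open scoped Classical in
lemma span_pw (pw : Perm (Fin n) → Perm (Fin n) → Pol n)
    (hpw : ∀ w, IsCanonical w (pw w)) {p : Perm (Fin n) → Pol n} (hp : GKM n p) :
    ∃ c : Perm (Fin n) → Pol n, ∑ v : Perm (Fin n), c v • pw v = p :=
  span_pw_aux pw hpw _ p hp le_rfl

lemma coords_unique (pw : Perm (Fin n) → Perm (Fin n) → Pol n)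
    (hpw : ∀ w, IsCanonical w (pw w)) {c d : Perm (Fin n) → Pol n}
    (h : ∑ v : Perm (Fin n), c v • pw v = ∑ v : Perm (Fin n), d v • pw v) :
    ∀ v, c v = d v := by
  have h2 : ∑ v : Perm (Fin n), (c v - d v) • pw v = 0 := by
    simp only [sub_smul, Finset.sum_sub_distrib, h, sub_self]
  intro v
  exact sub_eq_zero.mp (linind_pw pw hpw _ h2 v)

lemma mR_coords (pw : Perm (Fin n) → Perm (Fin n) → Pol n)
    (hpw : ∀ w, IsCanonical w (pw w)) :
    ∀ z ∈ mR n, ∃ c : Perm (Fin n) → Pol n,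
      (∀ v, c v ∈ mIdeal n) ∧ ∑ v : Perm (Fin n), c v • pw v = z := by
  set N : Submodule (Pol n) (Perm (Fin n) → Pol n) :=
    { carrier := {z | ∃ c : Perm (Fin n) → Pol n,
        (∀ v, c v ∈ mIdeal n) ∧ ∑ v : Perm (Fin n), c v • pw v = z}
      add_mem' := by
        rintro x y ⟨c, hc, rfl⟩ ⟨d, hd, rfl⟩
        refine ⟨c + d, fun v => add_mem (hc v) (hd v), ?_⟩
        rw [← Finset.sum_add_distrib]
        refine Finset.sum_congr rfl fun v _ => ?_
        simp [add_smul]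
      zero_mem' := ⟨0, fun v => zero_mem _, by simp⟩
      smul_mem' := by
        rintro a x ⟨c, hc, rfl⟩
        refine ⟨a • c, fun v => Ideal.mul_mem_left _ a (hc v), ?_⟩
        rw [Finset.smul_sum]
        refine Finset.sum_congr rfl fun v _ => ?_
        simp [smul_smul] } with hN
  intro z hz
  have hle : mR n ≤ N := by
    rw [mR, Submodule.span_le]
    rintro zz ⟨cc, hcc, p, hp, rfl⟩
    obtain ⟨c, hc⟩ := span_pw pw hpw hp
    refine ⟨fun v => cc * c v, fun v => Ideal.mul_mem_right _ _ hcc, ?_⟩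
    rw [← hc, Finset.smul_sum]
    refine Finset.sum_congr rfl fun v _ => ?_
    simp [smul_smul]
  exact hle hz

open scoped Classical in
lemma homog_coords (pw : Perm (Fin n) → Perm (Fin n) → Pol n)
    (hpw : ∀ w, IsCanonical w (pw w)) {q : Perm (Fin n) → Pol n} {d : ℕ}
    (hq : ∀ x, (q x).IsHomogeneous d) {c : Perm (Fin n) → Pol n}
    (hc : ∑ v : Perm (Fin n), c v • pw v = q) :
    ∑ v : Perm (Fin n),
      (if len v ≤ d then homogeneousComponent (d - len v) (c v) else 0) • pw v = q := by
  funext x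
  have h1 : ∀ x', q x' = ∑ v : Perm (Fin n), c v * pw v x' := by
    intro x'
    rw [← hc]
    simp [Finset.sum_apply]
  have h3 : homogeneousComponent d (q x) = q x := by
    rw [homogComp_of_isHomogeneous (hq x) d, if_pos rfl]
  simp only [Finset.sum_apply, Pi.smul_apply, smul_eq_mul]
  calc ∑ v : Perm (Fin n),
        (if len v ≤ d then homogeneousComponent (d - len v) (c v) else 0) * pw v x
      = ∑ v : Perm (Fin n), homogeneousComponent d (c v * pw v x) := by
        refine Finset.sum_congr rfl fun v _ => ?_
        rw [homogComp_mul ((hpw v).2.1 x) d, ite_mul, zero_mul]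
    _ = homogeneousComponent d (q x) := by rw [h1 x, map_sum]
    _ = q x := h3

lemma constantCoeff_eq_zero_of_mem_mIdeal {x : Pol n} (hx : x ∈ mIdeal n) :
    constantCoeff x = 0 := by
  have hle : mIdeal n ≤ RingHom.ker (constantCoeff : Pol n →+* ℂ) := by
    rw [mIdeal, Ideal.span_le]
    rintro y ⟨i, rfl⟩
    simp [RingHom.mem_ker]
  exact hle hx

end AvgAux6

/-- the averaging map `f(p) = (1/n!) Σ_{w} w·p` maps `R` into `R`, its
images are invariant under the dot action, and the averaged canonical classes
`{f(p_w)}` form a `ℂ[t₁,…,tₙ]`-module basis of `R`; hence the dot representation of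
`Sₙ` on `R` is a direct sum of `n!` copies of the trivial representation. -/
theorem averaging_map_trivial_representation (n : ℕ) (hn : 1 ≤ n)
    (pw : Perm (Fin n) → Perm (Fin n) → Pol n)
    (hpw : ∀ w, IsCanonical w (pw w)) :
    (∀ p, GKM n p → GKM n ((n.factorial : ℂ)⁻¹ • ∑ w : Perm (Fin n), dot w p)) ∧
    (∀ (u : Perm (Fin n)) (p), GKM n p →
      dot u ((n.factorial : ℂ)⁻¹ • ∑ w : Perm (Fin n), dot w p)
        = (n.factorial : ℂ)⁻¹ • ∑ w : Perm (Fin n), dot w p) ∧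
    ∃ b : Module.Basis (Perm (Fin n)) (Pol n) (gkmSubmodule n),
      ∀ w, (b w : Perm (Fin n) → Pol n)
        = (n.factorial : ℂ)⁻¹ • ∑ u : Perm (Fin n), dot u (pw w) := by
  classical
  refine ⟨fun p hp => avg_gkm hp _, fun u p hp => dot_avg u _ p, ?_⟩
  set q : Perm (Fin n) → Perm (Fin n) → Pol n :=
    fun w => (n.factorial : ℂ)⁻¹ • ∑ u : Perm (Fin n), dot u (pw w) with hqdef
  have hqgkm : ∀ w, GKM n (q w) := fun w => avg_gkm (hpw w).1 _
  have hqhom : ∀ w x, ((q w) x).IsHomogeneous (len w) :=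
    fun w x => avg_component_isHomogeneous ((hpw w).2.1) _ x
  have hdiff_hom : ∀ w x, ((q w - pw w) x).IsHomogeneous (len w) := fun w x =>
    (hqhom w x).sub ((hpw w).2.1 x)
  have hdiff_mR : ∀ w, (q w - pw w) ∈ mR n := fun w => avg_sub_mem_mR (hpw w).1
  have key : ∀ w, ∃ c : Perm (Fin n) → Pol n,
      (∀ v, ¬ len v < len w → c v = 0) ∧
      ∑ v : Perm (Fin n), c v • pw v = q w - pw w := by
    intro w
    obtain ⟨c₀, hc₀mem, hc₀⟩ := mR_coords pw hpw _ (hdiff_mR w)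
    have hc₁ :
        ∑ v : Perm (Fin n), (if len v ≤ len w then
          homogeneousComponent (len w - len v) (c₀ v) else 0) • pw v = q w - pw w :=
      homog_coords pw hpw (hdiff_hom w) hc₀
    refine ⟨fun v => if len v ≤ len w then
      homogeneousComponent (len w - len v) (c₀ v) else 0, ?_, hc₁⟩
    intro v hv
    by_cases hle : len v ≤ len w
    · have hEq : len w - len v = 0 := by omega
      have huniq := coords_unique pw hpw (hc₁.trans hc₀.symm) v
      simp only [if_pos hle] at huniq ⊢
      rw [hEq] at huniq ⊢
      apply homog_zero_constantCoeff_eq_zero (homogeneousComponent_isHomogeneous 0 (c₀ v))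
      rw [huniq]
      exact constantCoeff_eq_zero_of_mem_mIdeal (hc₀mem v)
    · simp only [if_neg hle]
  choose c hc0 hc using key
  -- linear independence of the averaged classes (in the ambient module)
  have hqli : ∀ g : Perm (Fin n) → Pol n,
      ∑ w : Perm (Fin n), g w • q w = 0 → ∀ w, g w = 0 := by
    intro g hg
    have hexp : ∑ v : Perm (Fin n),
        (g v + ∑ w : Perm (Fin n), g w * c w v) • pw v = 0 := by
      calc ∑ v : Perm (Fin n), (g v + ∑ w : Perm (Fin n), g w * c w v) • pw v
          = ∑ v : Perm (Fin n),
              (g v • pw v + ∑ w : Perm (Fin n), (g w * c w v) • pw v) := by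
            refine Finset.sum_congr rfl fun v _ => ?_
            rw [add_smul, Finset.sum_smul]
        _ = ∑ v : Perm (Fin n), g v • pw v
              + ∑ v : Perm (Fin n), ∑ w : Perm (Fin n), (g w * c w v) • pw v := by
            rw [Finset.sum_add_distrib]
        _ = ∑ w : Perm (Fin n), g w • pw w
              + ∑ w : Perm (Fin n), g w • ∑ v : Perm (Fin n), c w v • pw v := by
            congr 1
            rw [Finset.sum_comm]
            refine Finset.sum_congr rfl fun w _ => ?_
            rw [Finset.smul_sum]
            refine Finset.sum_congr rfl fun v _ => ?_
            rw [smul_smul]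
        _ = ∑ w : Perm (Fin n), g w • (pw w + (q w - pw w)) := by
            rw [← Finset.sum_add_distrib]
            refine Finset.sum_congr rfl fun w _ => ?_
            rw [hc w, smul_add]
        _ = ∑ w : Perm (Fin n), g w • q w := by
            refine Finset.sum_congr rfl fun w _ => ?_
            congr 1
            abel
        _ = 0 := hg
    have hzero := linind_pw pw hpw _ hexp
    by_contra hne
    push_neg at hne
    obtain ⟨m, hm, hmax⟩ := Finset.exists_max_image
      (Finset.univ.filter fun w : Perm (Fin n) => g w ≠ 0) len
      ⟨hne.choose, Finset.mem_filter.mpr ⟨Finset.mem_univ _, hne.choose_spec⟩⟩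
    have h := hzero m
    rw [Finset.sum_eq_zero, add_zero] at h
    · exact (Finset.mem_filter.mp hm).2 h
    · intro w _
      by_cases hgw : g w = 0
      · simp [hgw]
      · have hnl : ¬ len m < len w :=
          not_lt.mpr (hmax w (Finset.mem_filter.mpr ⟨Finset.mem_univ _, hgw⟩))
        rw [hc0 w m hnl, mul_zero]
  -- spanning
  have hspan : ∀ w : Perm (Fin n), pw w ∈ Submodule.span (Pol n) (Set.range q) := by
    have hstrong : ∀ (k : ℕ) (w : Perm (Fin n)), len w = k →
        pw w ∈ Submodule.span (Pol n) (Set.range q) := by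
      intro k
      induction k using Nat.strong_induction_on with
      | _ k ih =>
        intro w hw
        have heq : pw w = q w - ∑ v : Perm (Fin n), c w v • pw v := by
          rw [hc w]
          abel
        rw [heq]
        apply Submodule.sub_mem
        · exact Submodule.subset_span ⟨w, rfl⟩
        · apply Submodule.sum_mem
          intro v _
          by_cases hcv : c w v = 0
          · rw [hcv, zero_smul]
            exact zero_mem _
          · have hlt : len v < len w := by
              by_contra hnl
              exact hcv (hc0 w v hnl)
            exact Submodule.smul_mem _ _ (ih (len v) (hw ▸ hlt) v rfl)
    exact fun w => hstrong (len w) w rfl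
  have hspan_all : ∀ p : Perm (Fin n) → Pol n, GKM n p →
      ∃ d : Perm (Fin n) → Pol n, ∑ w : Perm (Fin n), d w • q w = p := by
    intro p hp
    obtain ⟨c2, hc2⟩ := span_pw pw hpw hp
    have hmem : p ∈ Submodule.span (Pol n) (Set.range q) := by
      rw [← hc2]
      exact Submodule.sum_mem _ fun v _ => Submodule.smul_mem _ _ (hspan v)
    exact (Submodule.mem_span_range_iff_exists_fun (Pol n)).mp hmem
  -- assemble the basis of the submodule
  set Q : Perm (Fin n) → gkmSubmodule n := fun w => ⟨q w, hqgkm w⟩ with hQdef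
  have hQli : LinearIndependent (Pol n) Q := by
    rw [Fintype.linearIndependent_iff]
    intro g hg
    apply hqli g
    have hcoe := congrArg (fun z : gkmSubmodule n => (z : Perm (Fin n) → Pol n)) hg
    simpa [hQdef] using hcoe
  have hQsp : ⊤ ≤ Submodule.span (Pol n) (Set.range Q) := by
    intro x _
    obtain ⟨d, hd⟩ := hspan_all (x : Perm (Fin n) → Pol n) x.2
    rw [Submodule.mem_span_range_iff_exists_fun]
    refine ⟨d, Subtype.ext ?_⟩
    have hcoe : ((∑ w : Perm (Fin n), d w • Q w : gkmSubmodule n) :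
        Perm (Fin n) → Pol n) = ∑ w : Perm (Fin n), d w • q w := by
      simp [hQdef]
    rw [hcoe, hd]
  refine ⟨Module.Basis.mk hQli hQsp, fun w => ?_⟩
  rw [Module.Basis.mk_apply]
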